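/- The left KG-module KG ⊗_{G_par} K_par G is isomorphic to KG ⊗_K B via g ⊗_{G_par} [h]u ↦ gh ⊗ e_{h^{-1}}u (u an idempotent of S(G)); in particular KG ⊗_{G_par} K_par G is free as a left KG-module. -/

import Mathlib

/-- The defining relations of Exel's semigroup `S(G)` of a group `G`:
`[1] = 1`, `[s⁻¹][s][t] = [s⁻¹][st]`, `[s][t][t⁻¹] = [st][t⁻¹]`. -/
inductive ExelRel (G : Type*) [Group G] : FreeMonoid G → FreeMonoid G → Prop
  | one : ExelRel G (FreeMonoid.of 1) 1
  | left (s t : G) : ExelRel G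
      (FreeMonoid.of s⁻¹ * FreeMonoid.of s * FreeMonoid.of t)
      (FreeMonoid.of s⁻¹ * FreeMonoid.of (s * t))
  | right (s t : G) : ExelRel G
      (FreeMonoid.of s * FreeMonoid.of t * FreeMonoid.of t⁻¹)
      (FreeMonoid.of (s * t) * FreeMonoid.of t⁻¹)

/-- The congruence on the free monoid on `G` generated by the Exel relations. -/
def ExelCon (G : Type*) [Group G] : Con (FreeMonoid G) := conGen (ExelRel G)

/-- Exel's semigroup (an inverse monoid) `S(G)` of the group `G`. -/
abbrev ExelMonoid (G : Type*) [Group G] := (ExelCon G).Quotient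

/-- The canonical generator `[g]` of `S(G)`. -/
def ExelMonoid.of {G : Type*} [Group G] (g : G) : ExelMonoid G :=
  (ExelCon G).mk' (FreeMonoid.of g)

/-- The idempotent `e_g := [g][g⁻¹]` in `S(G)`. -/
def ExelMonoid.e {G : Type*} [Group G] (g : G) : ExelMonoid G :=
  ExelMonoid.of g * ExelMonoid.of g⁻¹

/-- The partial group algebra `K_par G`: the semigroup `K`-algebra of Exel's semigroup. -/
abbrev KparG (K G : Type*) [CommRing K] [Group G] := MonoidAlgebra K (ExelMonoid G)

/-- The canonical generator `[g]` of `K_par G`. -/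
noncomputable def pr (K : Type*) {G : Type*} [CommRing K] [Group G] (g : G) : KparG K G :=
  MonoidAlgebra.of K (ExelMonoid G) (ExelMonoid.of g)

/-- The idempotent `e_g := [g][g⁻¹]` in `K_par G`. -/
noncomputable def eK (K : Type*) {G : Type*} [CommRing K] [Group G] (g : G) : KparG K G :=
  pr K g * pr K g⁻¹

open TensorProduct

/-- The group algebra `KG`. -/
abbrev KG (K G : Type*) [CommRing K] [Group G] := MonoidAlgebra K G

/-- The relation `KG`-submodule of `KG ⊗[K] M` defining `KG ⊗_{G_par} M` for a left
`K_par G`-module `M` with its induced partial action: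
generated by the elements `g ⊗ [h]·m − gh ⊗ e_{h⁻¹}·m`. -/
noncomputable def glueRel (K G M : Type*) [CommRing K] [Group G]
    [AddCommGroup M] [Module K M] [Module (KparG K G) M] [IsScalarTower K (KparG K G) M] :
    Submodule (KG K G) (KG K G ⊗[K] M) :=
  Submodule.span (KG K G) {w : KG K G ⊗[K] M | ∃ (g h : G) (m : M),
    w = MonoidAlgebra.of K G g ⊗ₜ[K] (pr K h • m) -
      MonoidAlgebra.of K G (g * h) ⊗ₜ[K] (eK K h⁻¹ • m)}

/-- The universal globalization `Λ(M) = KG ⊗_{G_par} M` of a left `K_par G`-module `M`. -/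
noncomputable abbrev Glob (K G M : Type*) [CommRing K] [Group G]
    [AddCommGroup M] [Module K M] [Module (KparG K G) M] [IsScalarTower K (KparG K G) M] :=
  KG K G ⊗[K] M ⧸ glueRel K G M

/-- `B`, the subalgebra of `K_par G` generated by the idempotents `e_g`. -/
noncomputable def Bsub (K G : Type*) [CommRing K] [Group G] : Subalgebra K (KparG K G) :=
  Algebra.adjoin K (Set.range fun g : G => eK K g)

theorem eK_mem_Bsub (K : Type*) {G : Type*} [CommRing K] [Group G] (g : G) :
    eK K g ∈ Bsub K G :=
  Algebra.subset_adjoin ⟨g, rfl⟩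

namespace ExelHelper
variable {G : Type*} [Group G]
open ExelMonoid

theorem mk_rel {x y : FreeMonoid G} (h : ExelRel G x y) :
    (ExelCon G).mk' x = (ExelCon G).mk' y :=
  (Con.eq _).mpr (ConGen.Rel.of x y h)

theorem of_one : ExelMonoid.of (1 : G) = 1 := by
  simpa [ExelMonoid.of] using mk_rel (ExelRel.one (G := G))

theorem rel_left (s t : G) :
    ExelMonoid.of s⁻¹ * ExelMonoid.of s * ExelMonoid.of t
      = ExelMonoid.of s⁻¹ * ExelMonoid.of (s * t) := by
  simpa [ExelMonoid.of, map_mul] using mk_rel (ExelRel.left s t)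

theorem rel_right (s t : G) :
    ExelMonoid.of s * ExelMonoid.of t * ExelMonoid.of t⁻¹
      = ExelMonoid.of (s * t) * ExelMonoid.of t⁻¹ := by
  simpa [ExelMonoid.of, map_mul] using mk_rel (ExelRel.right s t)

theorem sandwich (g : G) :
    ExelMonoid.of g * ExelMonoid.of g⁻¹ * ExelMonoid.of g = ExelMonoid.of g := by
  have := rel_right g g⁻¹
  simpa [of_one] using this

theorem mul_eq (g h : G) :
    ExelMonoid.of g * ExelMonoid.of h
      = ExelMonoid.of (g * h) * (ExelMonoid.of h⁻¹ * ExelMonoid.of h) := by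
  calc ExelMonoid.of g * ExelMonoid.of h
      = ExelMonoid.of g * (ExelMonoid.of h * ExelMonoid.of h⁻¹ * ExelMonoid.of h) := by
        rw [sandwich]
    _ = ExelMonoid.of g * ExelMonoid.of h * ExelMonoid.of h⁻¹ * ExelMonoid.of h := by
        simp [mul_assoc]
    _ = ExelMonoid.of (g * h) * ExelMonoid.of h⁻¹ * ExelMonoid.of h := by rw [rel_right]
    _ = _ := by rw [mul_assoc]

theorem e_mul_of (g x : G) :
    ExelMonoid.e (g * x) * ExelMonoid.of g = ExelMonoid.of g * ExelMonoid.e x := by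
  have h1 : ExelMonoid.of g * ExelMonoid.e x
      = ExelMonoid.of (g * x) * ExelMonoid.of x⁻¹ := by
    rw [ExelMonoid.e, ← mul_assoc, rel_right]
  have h2 : ExelMonoid.e (g * x) * ExelMonoid.of g
      = ExelMonoid.of (g * x) * ExelMonoid.of x⁻¹ := by
    rw [ExelMonoid.e, mul_assoc]
    have := rel_left (x⁻¹ * g⁻¹) g
    simp only [mul_inv_rev, inv_inv] at this ⊢
    rw [← mul_assoc, this]
    simp [mul_assoc]
  rw [h1, h2]

def theta : ExelMonoid G →* G :=
  Con.lift _ (FreeMonoid.lift id) (by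
    refine Con.conGen_le.mpr ?_
    intro x y h
    cases h <;> simp [Con.ker_rel, map_mul, mul_assoc])

@[simp] theorem theta_of (g : G) : theta (ExelMonoid.of g) = g := by
  rw [theta, ExelMonoid.of]
  erw [Con.lift_mk']
  simp

@[simp] theorem theta_e (g : G) : theta (ExelMonoid.e g) = 1 := by
  simp [ExelMonoid.e]

@[simp] theorem e_one : ExelMonoid.e (1 : G) = 1 := by
  simp [ExelMonoid.e, of_one]

theorem e_theta_mul (s : ExelMonoid G) : ExelMonoid.e (theta s) * s = s := by
  induction s using Con.induction_on with
  | H w =>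
    induction w using FreeMonoid.recOn with
    | one => simp
    | of_mul g w ih =>
      have hof : ((FreeMonoid.of g : FreeMonoid G) : ExelMonoid G) = ExelMonoid.of g := rfl
      rw [Con.coe_mul, hof, map_mul, theta_of, ← mul_assoc, e_mul_of, mul_assoc, ih]

/-- The submonoid of idempotents generated by the `e g`. -/
def E (G : Type*) [Group G] : Submonoid (ExelMonoid G) :=
  Submonoid.closure (Set.range (ExelMonoid.e (G := G)))

theorem e_mem_E (g : G) : ExelMonoid.e g ∈ E G :=
  Submonoid.subset_closure ⟨g, rfl⟩

theorem theta_eq_one_of_mem_E {s : ExelMonoid G} (hs : s ∈ E G) : theta s = 1 := by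
  induction hs using Submonoid.closure_induction with
  | mem x hx => obtain ⟨g, rfl⟩ := hx; simp
  | one => simp
  | mul x y _ _ hx hy => rw [map_mul, hx, hy, one_mul]

theorem u_mem (s : ExelMonoid G) : ExelMonoid.of (theta s)⁻¹ * s ∈ E G := by
  induction s using Con.induction_on with
  | H w =>
    induction w using FreeMonoid.recOn with
    | one =>
      simpa [of_one] using (E G).one_mem
    | of_mul g w ih =>
      have hof : ((FreeMonoid.of g : FreeMonoid G) : ExelMonoid G) = ExelMonoid.of g := rfl
      rw [Con.coe_mul, hof, map_mul, theta_of]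
      set h := theta (w : ExelMonoid G) with hh
      have hw : ExelMonoid.of h * (ExelMonoid.of h⁻¹ * (w : ExelMonoid G))
          = (w : ExelMonoid G) := by
        rw [← mul_assoc]; exact e_theta_mul _
      rw [← hw]
      rw [← mul_assoc (ExelMonoid.of g) (ExelMonoid.of h), mul_eq g h]
      simp only [mul_assoc]
      rw [hw, ← mul_assoc]
      refine mul_mem ?_ ih
      have : ExelMonoid.of (g * h)⁻¹ * ExelMonoid.of (g * h)
          = ExelMonoid.e ((g * h)⁻¹) := by simp [ExelMonoid.e]
      rw [this]; exact e_mem_E _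

theorem of_theta_u (s : ExelMonoid G) :
    ExelMonoid.of (theta s) * (ExelMonoid.of (theta s)⁻¹ * s) = s := by
  rw [← mul_assoc]; exact e_theta_mul s

theorem e_inv_u (s : ExelMonoid G) :
    ExelMonoid.e (theta s)⁻¹ * (ExelMonoid.of (theta s)⁻¹ * s)
      = ExelMonoid.of (theta s)⁻¹ * s := by
  rw [ExelMonoid.e, inv_inv]
  have hs : ExelMonoid.of (theta s)⁻¹ * ExelMonoid.of (theta s) * ExelMonoid.of (theta s)⁻¹
      = ExelMonoid.of (theta s)⁻¹ := by
    have := sandwich (theta s)⁻¹; rwa [inv_inv] at this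
  simp only [← mul_assoc]
  rw [hs]

theorem u_glue (h : G) (s : ExelMonoid G) :
    ExelMonoid.of (h * theta s)⁻¹ * (ExelMonoid.of h * s)
      = ExelMonoid.of (theta s)⁻¹ * (ExelMonoid.e h⁻¹ * s) := by
  rw [ExelMonoid.e, inv_inv]
  calc ExelMonoid.of (h * theta s)⁻¹ * (ExelMonoid.of h * s)
      = ExelMonoid.of ((theta s)⁻¹ * h⁻¹) * (ExelMonoid.of h * s) := by rw [mul_inv_rev]
    _ = ExelMonoid.of ((theta s)⁻¹ * h⁻¹) * (ExelMonoid.of h * ExelMonoid.of h⁻¹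
          * (ExelMonoid.of h * s)) := by
        rw [← mul_assoc (ExelMonoid.of h * ExelMonoid.of h⁻¹) (ExelMonoid.of h) s, sandwich]
    _ = ExelMonoid.of (theta s)⁻¹ * ExelMonoid.of h⁻¹ * (ExelMonoid.of h * s) := by
        rw [mul_eq (theta s)⁻¹ h⁻¹]
        simp only [inv_inv, mul_assoc]
    _ = _ := by simp only [mul_assoc]

end ExelHelper

set_option synthInstance.maxHeartbeats 1000000
set_option maxHeartbeats 1000000

section AlgebraPart
open ExelHelper TensorProduct

variable (K : Type*) [CommRing K] {G : Type*} [Group G]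

theorem ofS_e (g : G) : MonoidAlgebra.of K (ExelMonoid G) (ExelMonoid.e g) = eK K g := by
  simp [ExelMonoid.e, eK, pr, map_mul]

theorem ofS_mem_Bsub {s : ExelMonoid G} (hs : s ∈ E G) :
    MonoidAlgebra.of K (ExelMonoid G) s ∈ Bsub K G := by
  induction hs using Submonoid.closure_induction with
  | mem x hx =>
    obtain ⟨g, rfl⟩ := hx
    rw [ofS_e]; exact eK_mem_Bsub K g
  | one => rw [map_one]; exact (Bsub K G).one_mem
  | mul x y _ _ hx hy => rw [map_mul]; exact mul_mem hx hy

noncomputable def fAux (s : ExelMonoid G) : KG K G ⊗[K] (Bsub K G) :=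
  MonoidAlgebra.of K G (theta s) ⊗ₜ[K]
    ⟨MonoidAlgebra.of K (ExelMonoid G) (ExelMonoid.of (theta s)⁻¹ * s),
      ofS_mem_Bsub K (u_mem s)⟩

noncomputable def fLin : KparG K G →ₗ[K] KG K G ⊗[K] (Bsub K G) :=
  Finsupp.lift _ K _ (fAux K) ∘ₗ (MonoidAlgebra.coeffLinearEquiv K).toLinearMap

theorem fLin_single (s : ExelMonoid G) (k : K) :
    fLin K (MonoidAlgebra.single s k) = k • fAux K s := by
  rw [fLin, LinearMap.comp_apply]
  erw [Finsupp.lift_apply]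
  exact Finsupp.sum_single_index (zero_smul K _)

theorem fAux_key (h : G) (s : ExelMonoid G) :
    fAux K (ExelMonoid.of h * s)
      = MonoidAlgebra.of K G h • fAux K (ExelMonoid.e h⁻¹ * s) := by
  have ht : theta (ExelMonoid.e h⁻¹ * s) = theta s := by simp
  have ht2 : theta (ExelMonoid.of h * s) = h * theta s := by simp [map_mul]
  rw [fAux, fAux, TensorProduct.smul_tmul']
  congr 1
  · rw [ht, ht2, smul_eq_mul, ← map_mul]
  · apply Subtype.ext
    simp only
    rw [ht, ht2]
    exact congrArg _ (u_glue h s)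

theorem fLin_key (h : G) (m : KparG K G) :
    fLin K (pr K h * m) = MonoidAlgebra.of K G h • fLin K (eK K h⁻¹ * m) := by
  induction m using MonoidAlgebra.induction_linear with
  | zero => simp
  | add f g hf hg => rw [mul_add, mul_add, map_add, map_add, hf, hg, smul_add]
  | single s k =>
    have h1 : pr K h * MonoidAlgebra.single s k
        = MonoidAlgebra.single (ExelMonoid.of h * s) k := by
      simp [pr, MonoidAlgebra.of_apply, MonoidAlgebra.single_mul_single]
    have h2 : eK K h⁻¹ * MonoidAlgebra.single s k
        = MonoidAlgebra.single (ExelMonoid.e h⁻¹ * s) k := by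
      simp [eK, pr, MonoidAlgebra.of_apply, MonoidAlgebra.single_mul_single,
        ExelMonoid.e, mul_assoc]
    rw [h1, h2, fLin_single, fLin_single, fAux_key, smul_comm]

noncomputable def bLin : KG K G →ₗ[KG K G] (KparG K G →ₗ[K] KG K G ⊗[K] Bsub K G) where
  toFun x := x • fLin K
  map_add' x y := add_smul x y _
  map_smul' a x := mul_smul a x _

noncomputable def phi0 : KG K G ⊗[K] KparG K G →ₗ[KG K G] KG K G ⊗[K] Bsub K G :=
  TensorProduct.AlgebraTensorModule.lift (bLin K (G := G))

theorem phi0_tmul (x : KG K G) (m : KparG K G) :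
    phi0 K (x ⊗ₜ[K] m) = x • fLin K m := by
  rw [phi0, TensorProduct.AlgebraTensorModule.lift_tmul]; rfl

noncomputable def psi0 : KG K G ⊗[K] Bsub K G →ₗ[KG K G] KG K G ⊗[K] KparG K G :=
  TensorProduct.AlgebraTensorModule.map LinearMap.id (Bsub K G).val.toLinearMap

theorem psi0_tmul (x : KG K G) (b : Bsub K G) :
    psi0 K (x ⊗ₜ[K] b) = x ⊗ₜ[K] (b : KparG K G) := by
  rw [psi0, TensorProduct.AlgebraTensorModule.map_tmul]; rfl

theorem phi0_vanish : glueRel K G (KparG K G) ≤ LinearMap.ker (phi0 K (G := G)) := by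
  rw [glueRel]
  rw [Submodule.span_le]
  rintro w ⟨g, h, m, rfl⟩
  simp only [SetLike.mem_coe, LinearMap.mem_ker, map_sub, phi0_tmul, smul_eq_mul]
  rw [fLin_key K h m, smul_smul, ← map_mul, sub_self]

noncomputable def phiBar : Glob K G (KparG K G) →ₗ[KG K G] KG K G ⊗[K] Bsub K G :=
  Submodule.liftQ _ (phi0 K) (phi0_vanish K)

noncomputable def psiBar : KG K G ⊗[K] Bsub K G →ₗ[KG K G] Glob K G (KparG K G) :=
  (glueRel K G (KparG K G)).mkQ ∘ₗ psi0 K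

theorem B_span : Subalgebra.toSubmodule (Bsub K G) =
    Submodule.span K (MonoidAlgebra.of K (ExelMonoid G) '' (E G : Set (ExelMonoid G))) := by
  rw [Bsub, Algebra.adjoin_eq_span]
  congr 1
  have h1 : (Set.range fun g : G => eK K g)
      = MonoidAlgebra.of K (ExelMonoid G) '' Set.range (ExelMonoid.e (G := G)) := by
    ext x
    constructor
    · rintro ⟨g, rfl⟩; exact ⟨ExelMonoid.e g, ⟨g, rfl⟩, ofS_e K g⟩
    · rintro ⟨y, ⟨g, rfl⟩, rfl⟩; exact ⟨g, (ofS_e K g).symm⟩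
  rw [h1, ← MonoidHom.map_mclosure, Submonoid.coe_map]
  rfl

theorem span_mem_Bsub {u : KparG K G} (hu : u ∈ Submodule.span K
    (MonoidAlgebra.of K (ExelMonoid G) '' (E G : Set (ExelMonoid G)))) :
    u ∈ Bsub K G := by
  rw [← Subalgebra.mem_toSubmodule, B_span]; exact hu

theorem fLin_mem_aux (u : KparG K G) (hu : u ∈ Submodule.span K
    (MonoidAlgebra.of K (ExelMonoid G) '' (E G : Set (ExelMonoid G)))) :
    fLin K u = (1 : KG K G) ⊗ₜ[K] (⟨u, span_mem_Bsub K hu⟩ : Bsub K G) := by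
  induction hu using Submodule.span_induction with
  | mem x hx =>
    obtain ⟨s, hs, rfl⟩ := hx
    have h1 : theta s = 1 := theta_eq_one_of_mem_E hs
    have h2 : (MonoidAlgebra.of K (ExelMonoid G) s) = MonoidAlgebra.single s (1 : K) := rfl
    conv_lhs => rw [h2, fLin_single]
    rw [one_smul, fAux]
    congr 1
    · rw [h1, map_one]
    · apply Subtype.ext
      simp only
      rw [h1, inv_one, of_one, one_mul]
  | zero =>
    rw [map_zero]
    have : (⟨(0 : KparG K G), _⟩ : Bsub K G) = 0 := Subtype.ext rfl
    rw [this, tmul_zero]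
  | add x y hx hy ihx ihy =>
    rw [map_add, ihx, ihy, ← tmul_add]
    exact congrArg _ (Subtype.ext rfl)
  | smul k x hx ihx =>
    rw [map_smul, ihx, ← tmul_smul]
    exact congrArg _ (Subtype.ext rfl)

theorem fLin_mem (u : KparG K G) (hu : u ∈ Bsub K G) :
    fLin K u = (1 : KG K G) ⊗ₜ[K] (⟨u, hu⟩ : Bsub K G) := by
  have hu' : u ∈ Submodule.span K
      (MonoidAlgebra.of K (ExelMonoid G) '' (E G : Set (ExelMonoid G))) := by
    rw [← B_span]; exact hu
  rw [fLin_mem_aux K u hu']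

theorem glue_mk (g : G) (s : ExelMonoid G) :
    (Submodule.Quotient.mk (MonoidAlgebra.of K G g ⊗ₜ[K] MonoidAlgebra.of K (ExelMonoid G) s)
      : Glob K G (KparG K G))
    = Submodule.Quotient.mk (MonoidAlgebra.of K G (g * theta s) ⊗ₜ[K]
        MonoidAlgebra.of K (ExelMonoid G) (ExelMonoid.of (theta s)⁻¹ * s)) := by
  rw [Submodule.Quotient.eq]
  refine Submodule.subset_span
    ⟨g, theta s, MonoidAlgebra.of K (ExelMonoid G) (ExelMonoid.of (theta s)⁻¹ * s), ?_⟩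
  have hm1 : pr K (theta s) • MonoidAlgebra.of K (ExelMonoid G)
      (ExelMonoid.of (theta s)⁻¹ * s) = MonoidAlgebra.of K (ExelMonoid G) s := by
    rw [smul_eq_mul, pr, ← map_mul, of_theta_u]
  have hm2 : eK K (theta s)⁻¹ • MonoidAlgebra.of K (ExelMonoid G)
      (ExelMonoid.of (theta s)⁻¹ * s)
      = MonoidAlgebra.of K (ExelMonoid G) (ExelMonoid.of (theta s)⁻¹ * s) := by
    rw [smul_eq_mul, ← ofS_e, ← map_mul, e_inv_u]
  rw [hm1, hm2]

theorem psiBar_fLin (m : KparG K G) :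
    psiBar K (fLin K m)
      = Submodule.Quotient.mk ((1 : KG K G) ⊗ₜ[K] m) := by
  induction m using MonoidAlgebra.induction_linear with
  | zero => rw [map_zero, map_zero, tmul_zero, Submodule.Quotient.mk_zero]
  | add f g hf hg =>
    rw [map_add, map_add, hf, hg, tmul_add, Submodule.Quotient.mk_add]
  | single s k =>
    have h1 : psiBar K (fAux K s) = Submodule.Quotient.mk
        (MonoidAlgebra.of K G (theta s) ⊗ₜ[K]
          MonoidAlgebra.of K (ExelMonoid G) (ExelMonoid.of (theta s)⁻¹ * s)) := by
      rw [fAux, psiBar, LinearMap.comp_apply, psi0_tmul, Submodule.mkQ_apply]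
    have h2 := glue_mk K (1 : G) s
    rw [one_mul, map_one] at h2
    have hsing : (MonoidAlgebra.single s k : KparG K G)
        = k • MonoidAlgebra.of K (ExelMonoid G) s := by
      simp [MonoidAlgebra.of_apply, Finsupp.smul_single]
    rw [fLin_single, LinearMap.map_smul_of_tower, h1, ← h2, hsing, tmul_smul,
      Submodule.Quotient.mk_smul]

theorem free_B : Module.Free K (Bsub K G) := by
  have hli : LinearIndependent K
      (fun s : (E G) => MonoidAlgebra.of K (ExelMonoid G) (s : ExelMonoid G)) := by
    have h0 := (MonoidAlgebra.basis (ExelMonoid G) K).linearIndependent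
    have h2 := h0.comp (Subtype.val : (E G) → ExelMonoid G) Subtype.val_injective
    exact h2
  have hrange : Set.range (fun s : (E G) => MonoidAlgebra.of K (ExelMonoid G) (s : ExelMonoid G))
      = MonoidAlgebra.of K (ExelMonoid G) '' (E G : Set (ExelMonoid G)) := by
    ext x; simp
  have hspan : Subalgebra.toSubmodule (Bsub K G)
      = Submodule.span K (Set.range fun s : (E G) =>
          MonoidAlgebra.of K (ExelMonoid G) (s : ExelMonoid G)) := by
    rw [hrange, B_span]
  exact Module.Free.of_basis ((Module.Basis.span hli).map (LinearEquiv.ofEq _ _ hspan.symm))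

end AlgebraPart


set_option synthInstance.maxHeartbeats 1000000 in
/-- The left `KG`-module `KG ⊗_{G_par} K_par G` is isomorphic to `KG ⊗_K B` via
`g ⊗ [h]u ↦ gh ⊗ e_{h⁻¹}u` (`u ∈ B`); in particular `KG ⊗_{G_par} K_par G` is free
as a left `KG`-module. -/
theorem glob_kparG_iso (K G : Type*) [CommRing K] [Group G] :
    (∃ φ : Glob K G (KparG K G) ≃ₗ[KG K G] (KG K G ⊗[K] Bsub K G),
      ∀ (g h : G) (u : KparG K G) (hu : u ∈ Bsub K G),
        φ (Submodule.Quotient.mk (MonoidAlgebra.of K G g ⊗ₜ[K] (pr K h * u))) =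
          MonoidAlgebra.of K G (g * h) ⊗ₜ[K]
            (⟨eK K h⁻¹, eK_mem_Bsub K h⁻¹⟩ * ⟨u, hu⟩ : Bsub K G)) ∧
      Module.Free (KG K G) (Glob K G (KparG K G)) := by
  classical
  have h1 : ∀ z : KG K G ⊗[K] Bsub K G, phiBar K (psiBar K z) = z := by
    intro z
    induction z using TensorProduct.induction_on with
    | zero => rw [map_zero, map_zero]
    | tmul x b =>
      rw [psiBar, LinearMap.comp_apply, psi0_tmul, Submodule.mkQ_apply, phiBar,
        Submodule.liftQ_apply, phi0_tmul, fLin_mem K _ b.2,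
        TensorProduct.smul_tmul', smul_eq_mul, mul_one]
    | add u v hu hv => rw [map_add, map_add, hu, hv]
  have h2 : ∀ z : Glob K G (KparG K G), psiBar K (phiBar K z) = z := by
    intro z
    obtain ⟨w, rfl⟩ := Submodule.Quotient.mk_surjective _ z
    induction w using TensorProduct.induction_on with
    | zero => rw [Submodule.Quotient.mk_zero, map_zero, map_zero]
    | tmul x m =>
      rw [phiBar, Submodule.liftQ_apply, phi0_tmul, map_smul, psiBar_fLin,
        ← Submodule.Quotient.mk_smul, TensorProduct.smul_tmul', smul_eq_mul, mul_one]
    | add u v hu hv =>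
      rw [Submodule.Quotient.mk_add, map_add, map_add, hu, hv]
  let φ : Glob K G (KparG K G) ≃ₗ[KG K G] (KG K G ⊗[K] Bsub K G) :=
    LinearEquiv.ofLinear (phiBar K) (psiBar K)
      (LinearMap.ext fun z => by simpa using h1 z)
      (LinearMap.ext fun z => by simpa using h2 z)
  haveI : Module.Free K (Bsub K G) := free_B K
  refine ⟨⟨φ, ?_⟩, Module.Free.of_equiv φ.symm⟩
  intro g h u hu
  have hmem : eK K h⁻¹ * u ∈ Bsub K G := mul_mem (eK_mem_Bsub K h⁻¹) hu
  have step : φ (Submodule.Quotient.mk (MonoidAlgebra.of K G g ⊗ₜ[K] (pr K h * u)))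
      = MonoidAlgebra.of K G (g * h) ⊗ₜ[K] (⟨eK K h⁻¹ * u, hmem⟩ : Bsub K G) := by
    show phiBar K (Submodule.Quotient.mk (MonoidAlgebra.of K G g ⊗ₜ[K] (pr K h * u))) = _
    rw [phiBar, Submodule.liftQ_apply, phi0_tmul, fLin_key, fLin_mem K _ hmem,
      smul_smul, ← map_mul, TensorProduct.smul_tmul', smul_eq_mul, mul_one]
  rw [step]
  exact congrArg _ (Subtype.ext rfl)
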